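/- For λ = λ_r + i λ_i with λ_i < -1, the generalized Fourier transform (1/√(2π)) ∫_ℝ e^{-iλx} (e^x - e^k)^+ dx of the European call payoff h(x) = (e^x - e^k)^+ equals -e^{k - i k λ} / (√(2π) (iλ + λ²)), and in particular the integral converges absolutely. -/

import Mathlib

open MeasureTheory
open Set Filter

lemma cexp_integrableOn {a : ℂ} (ha : a.re < 0) (c : ℝ) :
    IntegrableOn (fun x : ℝ => Complex.exp (a * x)) (Ioi c) := by
  have h := exp_neg_integrableOn_Ioi c (b := -a.re) (by linarith)
  refine h.mono' ?_ ?_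
  · exact (Complex.continuous_exp.comp (continuous_const.mul Complex.continuous_ofReal)).aestronglyMeasurable.restrict
  · filter_upwards with x
    rw [Complex.norm_exp]
    simp [Complex.mul_re]

lemma cexp_integral_Ioi {a : ℂ} (ha : a.re < 0) (c : ℝ) :
    ∫ x in Ioi c, Complex.exp (a * x) = -Complex.exp (a * c) / a := by
  have ha0 : a ≠ 0 := fun h => by simp [h] at ha
  have hderiv : ∀ x ∈ Ici c, HasDerivAt (fun x : ℝ => Complex.exp (a * x) / a)
      (Complex.exp (a * x)) x := by
    intro x _
    have : HasDerivAt (fun x : ℝ => Complex.exp (a * x)) (Complex.exp (a * x) * a) x := by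
      have h1 : HasDerivAt (fun x : ℝ => a * (x : ℂ)) a x := by
        simpa using (Complex.ofRealCLM.hasDerivAt (x := x)).const_mul a
      simpa using h1.cexp
    simpa [mul_div_assoc, mul_div_cancel_right₀ _ ha0] using this.div_const a
  have htend : Tendsto (fun x : ℝ => Complex.exp (a * x) / a) atTop (nhds 0) := by
    rw [tendsto_zero_iff_norm_tendsto_zero]
    have : Tendsto (fun x : ℝ => Real.exp (a.re * x) / ‖a‖) atTop (nhds 0) := by
      have := (Real.tendsto_exp_atBot.comp
        (tendsto_id.const_mul_atTop_of_neg ha)).div_const ‖a‖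
      simpa using this
    refine this.congr fun x => ?_
    simp [Complex.norm_exp, Complex.mul_re]
  have := integral_Ioi_of_hasDerivAt_of_tendsto' hderiv (cexp_integrableOn ha c) htend
  rw [this]; ring

/-- Generalized Fourier transform of the European call payoff `(e^x - e^k)^+`:
for `λ = λ_r + i λ_i` with `λ_i < -1`, the integrand is absolutely integrable and
`(1/√(2π)) ∫ e^{-iλx} (e^x - e^k)^+ dx = -e^{k - i k λ} / (√(2π) (iλ + λ²))`. -/
theorem call_payoff_generalized_fourier_transform (k : ℝ) (lam : ℂ) (hlam : lam.im < -1) :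
    Integrable (fun x : ℝ =>
        Complex.exp (-Complex.I * lam * x) * (max (Real.exp x - Real.exp k) 0 : ℝ)) ∧
    (1 / Real.sqrt (2 * Real.pi) : ℂ) *
        ∫ x : ℝ, Complex.exp (-Complex.I * lam * x) * (max (Real.exp x - Real.exp k) 0 : ℝ) =
      -Complex.exp (k - Complex.I * k * lam) /
        (Real.sqrt (2 * Real.pi) * (Complex.I * lam + lam ^ 2)) := by
  set a : ℂ := 1 - Complex.I * lam with ha_def
  set b : ℂ := -Complex.I * lam with hb_def
  have hare : a.re = 1 + lam.im := by simp [ha_def]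
  have hbre : b.re = lam.im := by simp [hb_def]
  have ha : a.re < 0 := by rw [hare]; linarith
  have hb : b.re < 0 := by rw [hbre]; linarith
  have ha0 : a ≠ 0 := fun h => by simp [h] at ha
  have hb0 : b ≠ 0 := fun h => by simp [h] at hb
  -- indicator representation
  have hfun : (fun x : ℝ =>
      Complex.exp (-Complex.I * lam * x) * (max (Real.exp x - Real.exp k) 0 : ℝ)) =
      Set.indicator (Set.Ioi k)
        (fun x : ℝ => Complex.exp (a * x) - Real.exp k * Complex.exp (b * x)) := by
    funext x
    rcases le_or_gt x k with hx | hx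
    · rcases eq_or_lt_of_le hx with rfl | hx'
      · rw [Set.indicator_of_notMem (by simp)]
        simp
      · rw [Set.indicator_of_notMem (by simpa using hx'.not_gt)]
        have : Real.exp x - Real.exp k ≤ 0 := by
          simp [Real.exp_le_exp, hx'.le]
        rw [max_eq_right this]
        simp
    · rw [Set.indicator_of_mem (by simpa using hx)]
      have : (0:ℝ) ≤ Real.exp x - Real.exp k := by
        simp [Real.exp_le_exp, hx.le]
      rw [max_eq_left this]
      have : a * x = b * x + x := by rw [ha_def, hb_def]; push_cast; ring
      rw [this, Complex.exp_add]
      push_cast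
      ring
  have hint : IntegrableOn
      (fun x : ℝ => Complex.exp (a * x) - Real.exp k * Complex.exp (b * x)) (Set.Ioi k) := by
    exact (cexp_integrableOn ha k).sub ((cexp_integrableOn hb k).const_mul _)
  constructor
  · rw [hfun]
    exact (integrable_indicator_iff measurableSet_Ioi).2 hint
  · rw [hfun, integral_indicator measurableSet_Ioi]
    rw [integral_sub (cexp_integrableOn ha k) ((cexp_integrableOn hb k).const_mul _),
      integral_const_mul, cexp_integral_Ioi ha k, cexp_integral_Ioi hb k]
    have hsqrt : (Real.sqrt (2 * Real.pi) : ℂ) ≠ 0 := by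
      norm_cast
      exact (Real.sqrt_pos.2 (by positivity)).ne'
    have hexp_a : Complex.exp (a * k) = Real.exp k * Complex.exp (b * k) := by
      have : a * k = k + b * k := by rw [ha_def, hb_def]; push_cast; ring
      rw [this, Complex.exp_add]
      norm_cast
    have hexp_k : Complex.exp (k - Complex.I * k * lam) = Real.exp k * Complex.exp (b * k) := by
      have : (k : ℂ) - Complex.I * k * lam = k + b * k := by rw [hb_def]; ring
      rw [this, Complex.exp_add]
      norm_cast
    have hab : Complex.I * lam + lam ^ 2 = -(a * b) := by
      rw [ha_def, hb_def]; ring_nf; rw [Complex.I_sq]; ring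
    have habne : Complex.I * lam + lam ^ 2 ≠ 0 := by
      rw [hab]; simpa using mul_ne_zero ha0 hb0
    rw [hexp_a, hexp_k, hab]
    field_simp
    ring
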